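/- Let A and H be abelian groups and (h, c) an abelian 3-cocycle on A with values in H. If the triple (φ, ψ, k) is admissible relative to (h, c), then so is the triple (φ⁻¹, ψ⁻¹, −ψ⁻¹∘k∘(φ⁻¹×φ⁻¹)), and the product of (φ, ψ, k) with this triple (in either order) is (id_A, id_H, 0). -/

import Mathlib

namespace BraidedExt

variable {A H : Type*} [AddCommGroup A] [AddCommGroup H]

/-- The differential of a 1-cochain `η : A → H`. -/
def d1 (η : A → H) : A → A → H := fun a b => η b - η (a + b) + η a

/-- The differential of a 2-cochain `k : A² → H`. -/
def d2 (k : A → A → H) : A → A → A → H :=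
  fun a b c => k b c - k (a + b) c + k a (b + c) - k a b

/-- A 1-cochain is normalized if it vanishes at 0. -/
def Normalized1 (η : A → H) : Prop := η 0 = 0

/-- A 2-cochain is normalized if it vanishes whenever any argument is 0. -/
def Normalized2 (k : A → A → H) : Prop := ∀ a : A, k a 0 = 0 ∧ k 0 a = 0

/-- A 3-cochain is normalized if it vanishes whenever any argument is 0. -/
def Normalized3 (h : A → A → A → H) : Prop :=
  ∀ a b : A, h a b 0 = 0 ∧ h a 0 b = 0 ∧ h 0 a b = 0

/-- `h : A³ → H` is a normalized 3-cocycle. -/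
def IsCocycle3 (h : A → A → A → H) : Prop :=
  Normalized3 h ∧
    ∀ a₁ a₂ a₃ a₄ : A,
      h a₂ a₃ a₄ - h (a₁ + a₂) a₃ a₄ + h a₁ (a₂ + a₃) a₄ - h a₁ a₂ (a₃ + a₄) + h a₁ a₂ a₃ = 0

/-- `(h, c)` is an abelian 3-cocycle on `A` with values in `H`. -/
def IsAbelianCocycle (h : A → A → A → H) (c : A → A → H) : Prop :=
  IsCocycle3 h ∧
    (∀ a₁ a₂ b : A,
      c (a₁ + a₂) b = c a₁ b + c a₂ b + h a₁ a₂ b - h a₁ b a₂ + h b a₁ a₂) ∧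
    (∀ a b₁ b₂ : A,
      c a (b₁ + b₂) = c a b₁ + c a b₂ - h a b₁ b₂ + h b₁ a b₂ - h b₁ b₂ a)

/-- The triple `(φ, ψ, k)` is admissible relative to the abelian 3-cocycle `(h, c)`. -/
def Admissible (h : A → A → A → H) (c : A → A → H)
    (φ : A → A) (ψ : H → H) (k : A → A → H) : Prop :=
  Normalized2 k ∧
    (∀ a b c' : A, d2 k a b c' = ψ (h a b c') - h (φ a) (φ b) (φ c')) ∧
    (∀ a b : A, ψ (c a b) + k a b = k b a + c (φ a) (φ b))


/-- The product of triples `(φ, ψ, k) ∘ (φ', ψ', k') := (φ∘φ', ψ∘ψ', k∘(φ'×φ') + ψ∘k')`,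
encoded on the 2-cochain components. -/
def tripleProdK {A H : Type*} [AddCommGroup A] [AddCommGroup H]
    (φ' : A → A) (ψ : H → H) (k k' : A → A → H) : A → A → H :=
  fun a b => k (φ' a) (φ' b) + ψ (k' a b)

/-- **Statement 11.** If the triple `(φ, ψ, k)` is admissible relative to `(h, c)`, then so
is the triple `(φ⁻¹, ψ⁻¹, −ψ⁻¹∘k∘(φ⁻¹×φ⁻¹))`, and the product of `(φ, ψ, k)` with this
triple, in either order, is `(id_A, id_H, 0)`. -/
theorem admissible_inv {A H : Type*} [AddCommGroup A] [AddCommGroup H]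
    (h : A → A → A → H) (c : A → A → H) (habc : IsAbelianCocycle h c)
    (φ : A ≃+ A) (ψ : H ≃+ H) (k : A → A → H)
    (hk : Admissible h c φ ψ k) :
    Admissible h c φ.symm ψ.symm (fun a b => -ψ.symm (k (φ.symm a) (φ.symm b))) ∧
    ((fun a => φ (φ.symm a)) = (id : A → A) ∧ (fun x => ψ (ψ.symm x)) = (id : H → H) ∧
      tripleProdK (fun a => φ.symm a) (fun x => ψ x)
        k (fun a b => -ψ.symm (k (φ.symm a) (φ.symm b))) = fun _ _ => (0 : H)) ∧
    ((fun a => φ.symm (φ a)) = (id : A → A) ∧ (fun x => ψ.symm (ψ x)) = (id : H → H) ∧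
      tripleProdK (fun a => φ a) (fun x => ψ.symm x)
        (fun a b => -ψ.symm (k (φ.symm a) (φ.symm b))) k = fun _ _ => (0 : H)) := by
  obtain ⟨hnorm, hd2, hc⟩ := hk
  refine ⟨⟨?_, ?_, ?_⟩, ?_, ?_⟩
  · intro a
    constructor
    · simp [(hnorm (φ.symm a)).1]
    · simp [(hnorm (φ.symm a)).2]
  · intro a b c'
    have := hd2 (φ.symm a) (φ.symm b) (φ.symm c')
    simp only [d2, map_add] at this ⊢
    have h2 : ψ.symm (k (φ.symm b) (φ.symm c') - k (φ.symm a + φ.symm b) (φ.symm c')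
        + k (φ.symm a) (φ.symm b + φ.symm c') - k (φ.symm a) (φ.symm b))
        = ψ.symm (ψ (h (φ.symm a) (φ.symm b) (φ.symm c'))
          - h (φ (φ.symm a)) (φ (φ.symm b)) (φ (φ.symm c'))) := by rw [this]
    simp only [map_sub, map_add, ψ.symm_apply_apply, φ.apply_symm_apply] at h2
    simp only [← map_add] at h2 ⊢
    linear_combination (norm := abel) -h2
  · intro a b
    have := hc (φ.symm a) (φ.symm b)
    have h2 : ψ.symm (ψ (c (φ.symm a) (φ.symm b)) + k (φ.symm a) (φ.symm b))
        = ψ.symm (k (φ.symm b) (φ.symm a) + c (φ (φ.symm a)) (φ (φ.symm b))) := by rw [this]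
    simp only [map_add, ψ.symm_apply_apply, φ.apply_symm_apply] at h2
    linear_combination (norm := (abel_nf; simp [neg_smul, one_smul])) -h2
  · refine ⟨?_, ?_, ?_⟩
    · funext a; simp
    · funext x; simp
    · funext a b; simp [tripleProdK]
  · refine ⟨?_, ?_, ?_⟩
    · funext a; simp
    · funext x; simp
    · funext a b; simp [tripleProdK]


end BraidedExt
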